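/- For every seed set S ⊆ V there exists a distribution θ* ∈ Θ with E_{θ*}[R(c̃, S)] = |S| + Σ_{i ∈ V \ S} π*_i; consequently the correlation robust influence function admits the closed form f^corr(S) = |S| + Σ_{i ∈ V \ S} π*_i. -/

import Mathlib

open scoped BigOperators

namespace CorrIM

variable {V : Type*} [Fintype V] [DecidableEq V]

/-- A node `i` is influenced: `i ∈ S`, or `i` is reachable from some node of `S`
along the live edges of the scenario `c`. -/
def influenced (c : Finset (V × V)) (S : Finset V) (i : V) : Prop :=
  ∃ s ∈ S, Relation.ReflTransGen (fun a b : V => (a, b) ∈ c) s i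

/-- `R c S` : the number of influenced nodes in scenario `c` with seed set `S`. -/
noncomputable def R (c : Finset (V × V)) (S : Finset V) : ℕ :=
  Set.ncard {i : V | influenced c S i}

/-- The Fréchet class `Θ` : probability distributions on scenarios (subsets of `E`)
whose marginals agree with the edge likelihoods `p`. -/
def memTheta (E : Finset (V × V)) (p : V × V → ℝ) (θ : Finset (V × V) → ℝ) : Prop :=
  (∀ c, 0 ≤ θ c) ∧ (∀ c, θ c ≠ 0 → c ⊆ E) ∧ (∑ c : Finset (V × V), θ c) = 1 ∧
    ∀ e ∈ E, (∑ c : Finset (V × V), if e ∈ c then θ c else 0) = p e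

/-- Expected number of influenced nodes under the distribution `θ`. -/
noncomputable def expInf (θ : Finset (V × V) → ℝ) (S : Finset V) : ℝ :=
  ∑ c : Finset (V × V), θ c * (R c S : ℝ)

/-- The correlation robust influence function `f^corr`. -/
noncomputable def fcorr (E : Finset (V × V)) (p : V × V → ℝ) (S : Finset V) : ℝ :=
  sInf {x : ℝ | ∃ θ, memTheta E p θ ∧ x = expInf θ S}

open Classical in
/-- Probability of the event `A` under the distribution `θ`. -/
noncomputable def prob (θ : Finset (V × V) → ℝ) (A : Finset (V × V) → Prop) : ℝ :=
  ∑ c : Finset (V × V), if A c then θ c else 0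

/-- `γ` (a list of nodes `i₀, i₁, …, i_λ`, `λ ≥ 1`) is a directed path from the
seed set `S` to the node `i` using edges of `E`. -/
def IsPathFrom (E : Finset (V × V)) (S : Finset V) (i : V) (γ : List V) : Prop :=
  2 ≤ γ.length ∧ (∃ s ∈ S, γ.head? = some s) ∧ γ.getLast? = some i ∧
    γ.Chain' (fun a b : V => (a, b) ∈ E)

/-- The list of edges `(i₀,i₁), …, (i_{λ-1}, i_λ)` of a path `γ = [i₀, …, i_λ]`. -/
def pathEdges (γ : List V) : List (V × V) := γ.zip γ.tail

/-- The weight `L(γ) = 1 - ∑_{l=1}^{λ} (1 - p(i_{l-1}, i_l))` of a path. -/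
noncomputable def L (p : V × V → ℝ) (γ : List V) : ℝ :=
  1 - ((pathEdges γ).map (fun e => 1 - p e)).sum

/-- `π*_i = max(0, max_{γ ∈ Γ(S,i)} L(γ))`, with value `0` when `Γ(S,i) = ∅`. -/
noncomputable def piStar (E : Finset (V × V)) (p : V × V → ℝ) (S : Finset V) (i : V) : ℝ :=
  sSup (insert 0 {x : ℝ | ∃ γ : List V, IsPathFrom E S i γ ∧ x = L p γ})

/-- The independent cascade distribution `θ_ic` : each edge of `E` is live
independently with probability `p e`. -/
noncomputable def thetaIC (E : Finset (V × V)) (p : V × V → ℝ) (c : Finset (V × V)) : ℝ :=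
  if c ⊆ E then (∏ e ∈ c, p e) * ∏ e ∈ E \ c, (1 - p e) else 0

/-- The independent cascade influence function `f^ic`. -/
noncomputable def fic (E : Finset (V × V)) (p : V × V → ℝ) (S : Finset V) : ℝ :=
  expInf (thetaIC E p) S


set_option linter.unusedSectionVars false
section Lists
variable {c : Finset (V × V)} {r : V → V → Prop}

lemma pathEdges_cons_cons (a b : V) (l : List V) :
    pathEdges (a :: b :: l) = (a, b) :: pathEdges (b :: l) := by
  simp [pathEdges]

lemma chain'_cons_cons_iff {a b : V} {l : List V} :
    (a :: b :: l).Chain' r ↔ r a b ∧ (b :: l).Chain' r := List.isChain_cons_cons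

lemma chain'_append_iff {l₁ l₂ : List V} :
    (l₁ ++ l₂).Chain' r ↔ l₁.Chain' r ∧ l₂.Chain' r ∧
      ∀ x ∈ l₁.getLast?, ∀ y ∈ l₂.head?, r x y := List.isChain_append

lemma chain'_iff_pathEdges : ∀ {γ : List V},
    γ.Chain' r ↔ ∀ e ∈ pathEdges γ, r e.1 e.2
  | [] => by simp [pathEdges]; exact List.isChain_nil
  | [a] => by simp [pathEdges]; exact List.isChain_singleton a
  | a :: b :: l => by
    rw [chain'_cons_cons_iff, pathEdges_cons_cons, chain'_iff_pathEdges (γ := b :: l)]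
    simp

lemma chain'_reflTransGen : ∀ {l : List V} {u v : V},
    (u :: l).Chain' r → (u :: l).getLast? = some v → Relation.ReflTransGen r u v
  | [], u, v => by
    intro _ h
    simp at h
    exact h ▸ Relation.ReflTransGen.refl
  | b :: l, u, v => by
    intro hc hl
    rw [chain'_cons_cons_iff] at hc
    have := chain'_reflTransGen (l := l) (u := b) (v := v) hc.2 (by simpa using hl)
    exact Relation.ReflTransGen.head hc.1 this

lemma pathEdges_concat : ∀ (γ : List V) (hne : γ ≠ []) (v : V),
    pathEdges (γ ++ [v]) = pathEdges γ ++ [(γ.getLast hne, v)]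
  | [], hne, v => absurd rfl hne
  | [a], _, v => by simp [pathEdges]
  | a :: b :: l, _, v => by
    have := pathEdges_concat (b :: l) (by simp) v
    rw [show a :: b :: l ++ [v] = a :: b :: (l ++ [v]) from rfl,
      pathEdges_cons_cons a b (l ++ [v]), show b :: (l ++ [v]) = b :: l ++ [v] from rfl, this,
      pathEdges_cons_cons]
    simp [List.getLast]

lemma L_concat (p : V × V → ℝ) (γ : List V) (hne : γ ≠ []) (v : V) :
    L p (γ ++ [v]) = L p γ - (1 - p (γ.getLast hne, v)) := by
  rw [L, L, pathEdges_concat γ hne v]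
  simp
  ring

end Lists
section PiStar
variable {E : Finset (V × V)} {p : V × V → ℝ} {S : Finset V}

/-- Seed-adjusted potential: `1` on seeds, `π*` elsewhere. -/
noncomputable def piV (E : Finset (V × V)) (p : V × V → ℝ) (S : Finset V) (u : V) : ℝ :=
  if u ∈ S then 1 else piStar E p S u

lemma L_le_one (hp : ∀ e ∈ E, 0 ≤ p e ∧ p e ≤ 1) {γ : List V}
    (hc : γ.Chain' (fun a b : V => (a, b) ∈ E)) : L p γ ≤ 1 := by
  rw [chain'_iff_pathEdges] at hc
  have : 0 ≤ ((pathEdges γ).map (fun e => 1 - p e)).sum := by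
    apply List.sum_nonneg
    intro x hx
    obtain ⟨e, he, rfl⟩ := List.mem_map.mp hx
    have := (hp e (hc e he)).2
    linarith
  rw [L]; linarith

lemma bddAbove_pathSet (hp : ∀ e ∈ E, 0 ≤ p e ∧ p e ≤ 1) (i : V) :
    BddAbove (insert (0:ℝ) {x : ℝ | ∃ γ : List V, IsPathFrom E S i γ ∧ x = L p γ}) := by
  refine ⟨1, ?_⟩
  rintro x (rfl | ⟨γ, hγ, rfl⟩)
  · exact zero_le_one
  · exact L_le_one hp hγ.2.2.2

lemma piStar_nonneg (hp : ∀ e ∈ E, 0 ≤ p e ∧ p e ≤ 1) (i : V) : 0 ≤ piStar E p S i :=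
  le_csSup (bddAbove_pathSet hp i) (Set.mem_insert _ _)

lemma piStar_le_one (hp : ∀ e ∈ E, 0 ≤ p e ∧ p e ≤ 1) (i : V) : piStar E p S i ≤ 1 := by
  apply csSup_le ⟨0, Set.mem_insert _ _⟩
  rintro x (rfl | ⟨γ, hγ, rfl⟩)
  · exact zero_le_one
  · exact L_le_one hp hγ.2.2.2

lemma piV_nonneg (hp : ∀ e ∈ E, 0 ≤ p e ∧ p e ≤ 1) (u : V) : 0 ≤ piV E p S u := by
  unfold piV; split
  · exact zero_le_one
  · exact piStar_nonneg hp u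

lemma piV_le_one (hp : ∀ e ∈ E, 0 ≤ p e ∧ p e ≤ 1) (u : V) : piV E p S u ≤ 1 := by
  unfold piV; split
  · exact le_refl 1
  · exact piStar_le_one hp u

lemma le_piStar_of_path (hp : ∀ e ∈ E, 0 ≤ p e ∧ p e ≤ 1) {i : V} {γ : List V}
    (hγ : IsPathFrom E S i γ) : L p γ ≤ piStar E p S i :=
  le_csSup (bddAbove_pathSet hp i) (Set.mem_insert_of_mem _ ⟨γ, hγ, rfl⟩)

/-- Bellman inequality: `π_v ≥ π_u - (1 - p(u,v))` for an edge `(u,v) ∈ E`, `v ∉ S`. -/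
lemma bellman (hp : ∀ e ∈ E, 0 ≤ p e ∧ p e ≤ 1) {u v : V}
    (huv : (u, v) ∈ E) (hv : v ∉ S) :
    piV E p S u - (1 - p (u, v)) ≤ piStar E p S v := by
  by_cases hu : u ∈ S
  · have hpath : IsPathFrom E S v [u, v] := by
      refine ⟨by simp, ⟨u, hu, rfl⟩, by simp, ?_⟩
      exact chain'_cons_cons_iff.mpr ⟨huv, List.isChain_singleton v⟩
    have hL : L p [u, v] = 1 - (1 - p (u, v)) := by
      simp [L, pathEdges]
    have := le_piStar_of_path hp hpath
    rw [hL] at this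
    simpa [piV, hu] using this
  · simp only [piV, hu, if_false]
    rw [sub_le_iff_le_add]
    apply csSup_le ⟨0, Set.mem_insert _ _⟩
    rintro x (rfl | ⟨γ, hγ, rfl⟩)
    · have h1 := piStar_nonneg hp (S := S) v
      have h2 := (hp _ huv).2
      linarith
    · -- extend γ by v
      obtain ⟨hlen, ⟨s, hs, hhead⟩, hlast, hchain⟩ := hγ
      have hne : γ ≠ [] := by
        intro h; rw [h] at hlen; simp at hlen
      have hlast' : γ.getLast hne = u := by
        rwa [List.getLast?_eq_getLast hne, Option.some_inj] at hlast
      have hpath : IsPathFrom E S v (γ ++ [v]) := by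
        refine ⟨?_, ⟨s, hs, ?_⟩, ?_, ?_⟩
        · rw [List.length_append]; omega
        · rwa [List.head?_append_of_ne_nil _ hne]
        · exact List.getLast?_concat
        · rw [chain'_append_iff]
          refine ⟨hchain, List.isChain_singleton v, ?_⟩
          intro x hx y hy
          simp only [List.head?_cons, Option.mem_def, Option.some_inj] at hy
          rw [List.getLast?_eq_getLast hne, Option.mem_def, Option.some_inj] at hx
          rw [← hy, ← hx, hlast']
          exact huv
      have := le_piStar_of_path hp hpath
      rw [L_concat p γ hne v, hlast'] at this
      linarith

end PiStar
section Scen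
variable (E : Finset (V × V)) (p : V × V → ℝ) (S : Finset V)

/-- The edge `e` is dead at time `t` in the comonotone-along-paths coupling:
`t` lies in the interval `[π_{e.1} - (1-p e), π_{e.1})` taken modulo 1. -/
def deadAt (t : ℝ) (e : V × V) : Prop :=
  (0 ≤ piV E p S e.1 - (1 - p e) ∧ piV E p S e.1 - (1 - p e) ≤ t ∧ t < piV E p S e.1) ∨
  (piV E p S e.1 - (1 - p e) < 0 ∧ (t < piV E p S e.1 ∨ piV E p S e.1 - (1 - p e) + 1 ≤ t))

/-- The scenario at time `t`. -/
noncomputable def scen (t : ℝ) : Finset (V × V) :=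
  @Finset.filter _ (fun e => ¬ deadAt E p S t e) (Classical.decPred _) E

lemma mem_scen {t : ℝ} {e : V × V} :
    e ∈ scen E p S t ↔ e ∈ E ∧ ¬ deadAt E p S t e := by
  rw [scen]
  exact @Finset.mem_filter _ _ (Classical.decPred _) _ _

variable {E p S}
variable (hp : ∀ e ∈ E, 0 ≤ p e ∧ p e ≤ 1)

lemma scen_subset (t : ℝ) : scen E p S t ⊆ E := fun e he => ((mem_scen E p S).mp he).1

include hp in
lemma lt_piV_of_reach {t : ℝ} {u v : V}
    (h : Relation.ReflTransGen (fun a b : V => (a, b) ∈ scen E p S t) u v)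
    (hu : t < piV E p S u) : t < piV E p S v := by
  induction h with
  | refl => exact hu
  | @tail w v hw hwv ih =>
    rw [mem_scen] at hwv
    obtain ⟨hE, hdead⟩ := hwv
    rw [deadAt] at hdead
    push_neg at hdead
    set a := piV E p S w - (1 - p (w, v)) with ha
    have haa : 0 ≤ a := by
      by_contra hneg
      push_neg at hneg
      have := (hdead.2 hneg).1
      linarith
    have hta : t < a := by
      rcases lt_or_ge t a with h1 | h1
      · exact h1
      · have := hdead.1 haa h1
        linarith
    by_cases hv : v ∈ S
    · have h1 : piV E p S w ≤ 1 := piV_le_one hp w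
      have h2 : 0 ≤ 1 - p (w, v) := by have := (hp _ hE).2; linarith
      calc t < a := hta
        _ ≤ 1 := by rw [ha]; linarith
        _ = piV E p S v := by simp [piV, hv]
    · have := bellman hp hE hv
      simp only [piV, hv, if_false]
      calc t < a := hta
        _ ≤ piStar E p S v := this
  
include hp in
lemma reach_of_lt : ∀ (rest : List V) (u : V) {t : ℝ},
    (u :: rest).Chain' (fun a b : V => (a, b) ∈ E) → 0 ≤ t →
    t < piV E p S u - ((pathEdges (u :: rest)).map (fun e => 1 - p e)).sum →
    Relation.ReflTransGen (fun a b : V => (a, b) ∈ scen E p S t) u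
      ((u :: rest).getLast (by simp))
  | [], u, t => by
    intro _ _ _
    simp only [List.getLast_singleton]
    exact Relation.ReflTransGen.refl
  | v :: rest, u, t => by
    intro hc ht hlt
    rw [chain'_cons_cons_iff] at hc
    rw [pathEdges_cons_cons] at hlt
    simp only [List.map_cons, List.sum_cons] at hlt
    have hQ : 0 ≤ ((pathEdges (v :: rest)).map (fun e => 1 - p e)).sum := by
      apply List.sum_nonneg
      intro x hx
      obtain ⟨e, he, rfl⟩ := List.mem_map.mp hx
      have := (hp e (chain'_iff_pathEdges.mp hc.2 e he)).2
      linarith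
    set a := piV E p S u - (1 - p (u, v)) with ha
    have hta : t < a := by rw [ha]; linarith
    have hlive : (u, v) ∈ scen E p S t := by
      rw [mem_scen]
      refine ⟨hc.1, ?_⟩
      rw [deadAt]
      push_neg
      constructor
      · intro _ h1
        exact absurd hta (not_lt.mpr h1)
      · intro hneg
        exact absurd (le_trans ht hta.le) (not_le.mpr hneg)
    have hpiv : a ≤ piV E p S v := by
      by_cases hv : v ∈ S
      · have h1 : piV E p S u ≤ 1 := piV_le_one hp u
        have h2 : 0 ≤ 1 - p (u, v) := by have := (hp _ hc.1).2; linarith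
        have h3 : piV E p S v = 1 := by simp [piV, hv]
        rw [ha, h3]; linarith
      · simp only [piV, hv, if_false]; exact bellman hp hc.1 hv
    have ih := reach_of_lt rest v hc.2 ht (by linarith)
    have hlast : (u :: v :: rest).getLast (by simp) = (v :: rest).getLast (by simp) := by
      simp [List.getLast]
    rw [hlast]
    exact Relation.ReflTransGen.head hlive ih

include hp in
lemma influenced_scen_iff {t : ℝ} (ht0 : 0 ≤ t) (ht1 : t < 1) (i : V) :
    influenced (scen E p S t) S i ↔ (i ∈ S ∨ t < piStar E p S i) := by
  constructor
  · rintro ⟨s, hs, hreach⟩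
    by_cases hi : i ∈ S
    · exact Or.inl hi
    · refine Or.inr ?_
      have h1 : t < piV E p S s := by simp [piV, hs]; linarith
      have := lt_piV_of_reach hp hreach h1
      simpa [piV, hi] using this
  · rintro (hi | hlt)
    · exact ⟨i, hi, Relation.ReflTransGen.refl⟩
    · have hne : (insert (0:ℝ) {x : ℝ | ∃ γ : List V, IsPathFrom E S i γ ∧ x = L p γ}).Nonempty :=
        ⟨0, Set.mem_insert _ _⟩
      obtain ⟨x, hx, htx⟩ := exists_lt_of_lt_csSup hne hlt
      rcases hx with rfl | ⟨γ, hγ, rfl⟩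
      · linarith
      · obtain ⟨hlen, ⟨s, hs, hhead⟩, hlast, hchain⟩ := hγ
        obtain ⟨rest, rfl⟩ : ∃ rest, γ = s :: rest := by
          cases γ with
          | nil => simp at hhead
          | cons a l =>
            simp only [List.head?_cons, Option.some_inj] at hhead
            exact ⟨l, by rw [hhead]⟩
        rw [L] at htx
        have hpis : piV E p S s = 1 := by simp [piV, hs]
        have hreach := reach_of_lt hp rest s hchain ht0 (by rw [hpis]; linarith)
        have : (s :: rest).getLast (by simp) = i := by
          rwa [List.getLast?_eq_getLast (by simp : s :: rest ≠ []), Option.some_inj] at hlast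
        rw [this] at hreach
        exact ⟨s, hs, hreach⟩

end Scen
section Bps
variable (E : Finset (V × V)) (p : V × V → ℝ) (S : Finset V)

/-- The breakpoints of the coupling, a finite subset of `[0,1]`. -/
noncomputable def bps : Finset ℝ :=
  (insert (0:ℝ) (insert 1
    ((Finset.univ.image (piV E p S)) ∪ (E.image (fun e => piV E p S e.1 - (1 - p e))) ∪
      (E.image (fun e => piV E p S e.1 - (1 - p e) + 1))))).filter (fun x => 0 ≤ x ∧ x ≤ 1)

/-- The successor breakpoint. -/
noncomputable def nxt (x : ℝ) : ℝ :=
  if h : ((bps E p S).filter (fun y => x < y)).Nonempty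
    then ((bps E p S).filter (fun y => x < y)).min' h else x + 1

variable {E p S}

lemma zero_mem_bps : (0:ℝ) ∈ bps E p S := by
  rw [bps, Finset.mem_filter]
  exact ⟨Finset.mem_insert_self _ _, le_refl 0, zero_le_one⟩

lemma one_mem_bps : (1:ℝ) ∈ bps E p S := by
  rw [bps, Finset.mem_filter]
  exact ⟨Finset.mem_insert_of_mem (Finset.mem_insert_self _ _), zero_le_one, le_refl 1⟩

lemma bps_nonneg {x : ℝ} (hx : x ∈ bps E p S) : 0 ≤ x := by
  rw [bps, Finset.mem_filter] at hx; exact hx.2.1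

lemma bps_le_one {x : ℝ} (hx : x ∈ bps E p S) : x ≤ 1 := by
  rw [bps, Finset.mem_filter] at hx; exact hx.2.2

variable (hp : ∀ e ∈ E, 0 ≤ p e ∧ p e ≤ 1)

include hp in
lemma piV_mem_bps (u : V) : piV E p S u ∈ bps E p S := by
  rw [bps, Finset.mem_filter]
  refine ⟨?_, piV_nonneg hp u, piV_le_one hp u⟩
  apply Finset.mem_insert_of_mem
  apply Finset.mem_insert_of_mem
  apply Finset.mem_union_left
  apply Finset.mem_union_left
  exact Finset.mem_image_of_mem _ (Finset.mem_univ u)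

include hp in
lemma a_mem_bps {e : V × V} (he : e ∈ E) (h0 : 0 ≤ piV E p S e.1 - (1 - p e)) :
    piV E p S e.1 - (1 - p e) ∈ bps E p S := by
  rw [bps, Finset.mem_filter]
  have h1 : piV E p S e.1 - (1 - p e) ≤ 1 := by
    have h2 : piV E p S e.1 ≤ 1 := piV_le_one hp e.1
    have := (hp e he).2
    linarith
  refine ⟨?_, h0, h1⟩
  apply Finset.mem_insert_of_mem
  apply Finset.mem_insert_of_mem
  apply Finset.mem_union_left
  apply Finset.mem_union_right
  exact Finset.mem_image_of_mem _ he

include hp in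
lemma a1_mem_bps {e : V × V} (he : e ∈ E) (h0 : piV E p S e.1 - (1 - p e) < 0) :
    piV E p S e.1 - (1 - p e) + 1 ∈ bps E p S := by
  rw [bps, Finset.mem_filter]
  have h1 : 0 ≤ piV E p S e.1 - (1 - p e) + 1 := by
    have h2 : (0:ℝ) ≤ piV E p S e.1 := piV_nonneg hp e.1
    have := (hp e he).1
    linarith
  refine ⟨?_, h1, by linarith⟩
  apply Finset.mem_insert_of_mem
  apply Finset.mem_insert_of_mem
  apply Finset.mem_union_right
  exact Finset.mem_image_of_mem _ he

lemma nxt_spec {x : ℝ} (hx : x < 1) :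
    nxt E p S x ∈ bps E p S ∧ x < nxt E p S x ∧
      ∀ y ∈ bps E p S, x < y → nxt E p S x ≤ y := by
  have hne : ((bps E p S).filter (fun y => x < y)).Nonempty :=
    ⟨1, Finset.mem_filter.mpr ⟨one_mem_bps, hx⟩⟩
  rw [nxt, dif_pos hne]
  have hmem := Finset.min'_mem _ hne
  rw [Finset.mem_filter] at hmem
  exact ⟨hmem.1, hmem.2, fun y hy hxy =>
    Finset.min'_le _ _ (Finset.mem_filter.mpr ⟨hy, hxy⟩)⟩

include hp in
lemma sum_interval (b : ℝ) (hb : b ∈ bps E p S) :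
    ∀ (n : ℕ) (a : ℝ), a ∈ bps E p S → a ≤ b →
      ((bps E p S).filter (fun x => a ≤ x ∧ x < b)).card ≤ n →
      ∑ x ∈ (bps E p S).filter (fun x => a ≤ x ∧ x < b), (nxt E p S x - x) = b - a := by
  intro n
  induction n with
  | zero =>
    intro a ha hab hcard
    rcases eq_or_lt_of_le hab with rfl | hlt
    · rw [Finset.filter_false_of_mem (fun x hx h => absurd (lt_of_le_of_lt h.1 h.2) (lt_irrefl _)),
        Finset.sum_empty]
      ring
    · exfalso
      have : a ∈ (bps E p S).filter (fun x => a ≤ x ∧ x < b) :=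
        Finset.mem_filter.mpr ⟨ha, le_refl a, hlt⟩
      have := Finset.card_pos.mpr ⟨a, this⟩
      omega
  | succ n ih =>
    intro a ha hab hcard
    rcases eq_or_lt_of_le hab with rfl | hlt
    · rw [Finset.filter_false_of_mem (fun x hx h => absurd (lt_of_le_of_lt h.1 h.2) (lt_irrefl _)),
        Finset.sum_empty]
      ring
    · have ha1 : a < 1 := lt_of_lt_of_le hlt (bps_le_one hb)
      obtain ⟨hmem, hlt', hmin⟩ := nxt_spec (E := E) (p := p) (S := S) ha1
      set a' := nxt E p S a with ha'
      have ha'b : a' ≤ b := hmin b hb hlt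
      have hsplit : (bps E p S).filter (fun x => a ≤ x ∧ x < b) =
          insert a ((bps E p S).filter (fun x => a' ≤ x ∧ x < b)) := by
        ext x
        simp only [Finset.mem_filter, Finset.mem_insert]
        constructor
        · rintro ⟨hxb, hax, hxbb⟩
          rcases eq_or_lt_of_le hax with rfl | hax'
          · exact Or.inl rfl
          · exact Or.inr ⟨hxb, hmin x hxb hax', hxbb⟩
        · rintro (rfl | ⟨hxb, hax, hxbb⟩)
          · exact ⟨ha, le_refl _, hlt⟩
          · exact ⟨hxb, le_trans hlt'.le hax, hxbb⟩
      have hanotin : a ∉ (bps E p S).filter (fun x => a' ≤ x ∧ x < b) := by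
        rw [Finset.mem_filter]
        rintro ⟨-, h1, -⟩
        exact absurd (lt_of_lt_of_le hlt' h1) (lt_irrefl a)
      have hcard' : ((bps E p S).filter (fun x => a' ≤ x ∧ x < b)).card ≤ n := by
        have := hsplit ▸ hcard
        rw [Finset.card_insert_of_notMem hanotin] at this
        omega
      rw [hsplit, Finset.sum_insert hanotin, ih a' hmem ha'b hcard']
      ring

include hp in
lemma sum_interval' {a b : ℝ} (ha : a ∈ bps E p S) (hb : b ∈ bps E p S) (hab : a ≤ b) :
    ∑ x ∈ (bps E p S).filter (fun x => a ≤ x ∧ x < b), (nxt E p S x - x) = b - a := by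
  exact sum_interval hp b hb _ a ha hab (le_refl _)

end Bps
section Theta
variable (E : Finset (V × V)) (p : V × V → ℝ) (S : Finset V)

open Classical in
/-- The worst-case distribution: push-forward of the uniform distribution on `[0,1)`
under `t ↦ scen t`. -/
noncomputable def thetaStar (c : Finset (V × V)) : ℝ :=
  ∑ x ∈ ((bps E p S).erase 1).filter (fun x => scen E p S x = c), (nxt E p S x - x)

variable {E p S}

lemma mem_K_iff {x : ℝ} : x ∈ (bps E p S).erase 1 ↔ x ∈ bps E p S ∧ x < 1 := by
  rw [Finset.mem_erase]
  constructor
  · rintro ⟨h1, h2⟩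
    exact ⟨h2, lt_of_le_of_ne (bps_le_one h2) h1⟩
  · rintro ⟨h1, h2⟩
    exact ⟨ne_of_lt h2, h1⟩

open Classical in
lemma sum_c_theta_mul (f : Finset (V × V) → ℝ) :
    ∑ c : Finset (V × V), thetaStar E p S c * f c =
      ∑ x ∈ (bps E p S).erase 1, (nxt E p S x - x) * f (scen E p S x) := by
  rw [← Finset.sum_fiberwise ((bps E p S).erase 1) (fun x => scen E p S x)
    (fun x => (nxt E p S x - x) * f (scen E p S x))]
  apply Finset.sum_congr rfl
  intro c _
  rw [thetaStar, Finset.sum_mul]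
  apply Finset.sum_congr rfl
  intro x hx
  rw [Finset.mem_filter] at hx
  rw [hx.2]

variable (hp : ∀ e ∈ E, 0 ≤ p e ∧ p e ≤ 1)

include hp in
lemma sum_K_delta : ∑ x ∈ (bps E p S).erase 1, (nxt E p S x - x) = 1 := by
  have h : (bps E p S).erase 1 = (bps E p S).filter (fun x => 0 ≤ x ∧ x < 1) := by
    ext x
    rw [mem_K_iff, Finset.mem_filter]
    constructor
    · rintro ⟨h1, h2⟩; exact ⟨h1, bps_nonneg h1, h2⟩
    · rintro ⟨h1, _, h2⟩; exact ⟨h1, h2⟩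
  rw [h, sum_interval' hp zero_mem_bps one_mem_bps zero_le_one]
  norm_num

open Classical in
include hp in
lemma sum_dead (e : V × V) (he : e ∈ E) :
    ∑ x ∈ ((bps E p S).erase 1).filter (fun x => deadAt E p S x e), (nxt E p S x - x)
      = 1 - p e := by
  set π := piV E p S e.1 with hπ
  set a := π - (1 - p e) with ha
  have hπ1 : π ≤ 1 := piV_le_one hp e.1
  have hπ0 : 0 ≤ π := piV_nonneg hp e.1
  have hqle : a ≤ π := by have := (hp e he).2; rw [ha]; linarith
  rcases le_or_gt 0 a with h0 | h0
  · have hset : ((bps E p S).erase 1).filter (fun x => deadAt E p S x e) =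
        (bps E p S).filter (fun x => a ≤ x ∧ x < π) := by
      ext x
      rw [Finset.mem_filter, Finset.mem_filter, mem_K_iff]
      constructor
      · rintro ⟨⟨hx, _⟩, hd⟩
        rcases hd with ⟨-, h1, h2⟩ | ⟨hneg, -⟩
        · exact ⟨hx, h1, h2⟩
        · rw [← ha] at hneg; linarith
      · rintro ⟨hx, h1, h2⟩
        refine ⟨⟨hx, lt_of_lt_of_le h2 hπ1⟩, Or.inl ⟨h0, h1, h2⟩⟩
    rw [hset, sum_interval' hp (a_mem_bps hp he h0) (piV_mem_bps hp e.1) hqle]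
    ring
  · have hπa1 : π ≤ a + 1 := by
      have := (hp e he).1; rw [ha]; linarith
    have hset : ((bps E p S).erase 1).filter (fun x => deadAt E p S x e) =
        (bps E p S).filter (fun x => 0 ≤ x ∧ x < π) ∪
          (bps E p S).filter (fun x => a + 1 ≤ x ∧ x < 1) := by
      ext x
      rw [Finset.mem_filter, Finset.mem_union, Finset.mem_filter, Finset.mem_filter, mem_K_iff]
      constructor
      · rintro ⟨⟨hx, hx1⟩, hd⟩
        rcases hd with ⟨hnn, -, -⟩ | ⟨-, h2 | h2⟩
        · linarith
        · exact Or.inl ⟨hx, bps_nonneg hx, h2⟩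
        · exact Or.inr ⟨hx, h2, hx1⟩
      · rintro (⟨hx, h1, h2⟩ | ⟨hx, h1, h2⟩)
        · exact ⟨⟨hx, lt_of_lt_of_le h2 hπ1⟩, Or.inr ⟨h0, Or.inl h2⟩⟩
        · exact ⟨⟨hx, h2⟩, Or.inr ⟨h0, Or.inr h1⟩⟩
    have hdisj : Disjoint ((bps E p S).filter (fun x => 0 ≤ x ∧ x < π))
        ((bps E p S).filter (fun x => a + 1 ≤ x ∧ x < 1)) := by
      rw [Finset.disjoint_left]
      intro x hx1 hx2
      rw [Finset.mem_filter] at hx1 hx2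
      have := hx1.2.2
      have := hx2.2.1
      linarith
    rw [hset, Finset.sum_union hdisj,
      sum_interval' hp zero_mem_bps (piV_mem_bps hp e.1) hπ0,
      sum_interval' hp (a1_mem_bps hp he h0) one_mem_bps (by linarith)]
    ring

open Classical in
include hp in
lemma sum_live (e : V × V) (he : e ∈ E) :
    ∑ x ∈ (bps E p S).erase 1,
      (nxt E p S x - x) * (if e ∈ scen E p S x then 1 else 0) = p e := by
  classical
  have hsplit := Finset.sum_filter_add_sum_filter_not ((bps E p S).erase 1)
    (fun x => deadAt E p S x e) (fun x => nxt E p S x - x)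
  have h1 : ∑ x ∈ ((bps E p S).erase 1).filter (fun x => ¬ deadAt E p S x e),
      (nxt E p S x - x) = p e := by
    have := sum_dead (S := S) hp e he
    have htot := sum_K_delta hp (S := S)
    linarith
  rw [← h1]
  simp only [mul_ite, mul_one, mul_zero]
  rw [← Finset.sum_filter]
  apply Finset.sum_congr _ (fun _ _ => rfl)
  ext x
  rw [Finset.mem_filter, Finset.mem_filter, mem_scen]
  tauto

include hp in
lemma memTheta_thetaStar : memTheta E p (thetaStar E p S) := by
  classical
  refine ⟨?_, ?_, ?_, ?_⟩
  · intro c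
    apply Finset.sum_nonneg
    intro x hx
    rw [Finset.mem_filter, mem_K_iff] at hx
    have := (nxt_spec (E := E) (p := p) (S := S) hx.1.2).2.1
    linarith
  · intro c hc
    rw [thetaStar] at hc
    obtain ⟨x, hx⟩ := Finset.exists_ne_zero_of_sum_ne_zero hc
    rw [Finset.mem_filter] at hx
    rw [← hx.1.2]
    exact scen_subset _
  · have := sum_c_theta_mul (E := E) (p := p) (S := S) (fun _ => 1)
    simp only [mul_one] at this
    rw [this, sum_K_delta hp]
  · intro e he
    have h2 := sum_c_theta_mul (E := E) (p := p) (S := S)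
      (fun c => if e ∈ c then 1 else 0)
    calc ∑ c : Finset (V × V), (if e ∈ c then thetaStar E p S c else 0)
        = ∑ c : Finset (V × V), thetaStar E p S c * (if e ∈ c then 1 else 0) := by
          apply Finset.sum_congr rfl
          intro c _
          by_cases h : e ∈ c <;> simp [h]
      _ = p e := by rw [h2]; exact sum_live hp e he

open Classical in
lemma R_eq_sum (c : Finset (V × V)) (S : Finset V) :
    (R c S : ℝ) = ∑ i : V, if influenced c S i then 1 else 0 := by
  rw [R, Set.ncard_eq_toFinset_card', Set.toFinset_setOf, Finset.card_filter]
  push_cast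
  apply Finset.sum_congr rfl
  intro i _
  by_cases h : influenced c S i <;> simp [h]

include hp in
lemma R_scen {t : ℝ} (ht0 : 0 ≤ t) (ht1 : t < 1) :
    (R (scen E p S t) S : ℝ) =
      (S.card : ℝ) + ∑ i ∈ Finset.univ \ S, (if t < piStar E p S i then 1 else 0) := by
  classical
  rw [R_eq_sum, ← Finset.sum_sdiff (Finset.subset_univ S)]
  have h1 : ∑ i ∈ S, (if influenced (scen E p S t) S i then (1:ℝ) else 0) = S.card := by
    rw [Finset.sum_congr rfl (fun i hi => if_pos ⟨i, hi, Relation.ReflTransGen.refl⟩)]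
    simp
  have h2 : ∑ i ∈ Finset.univ \ S, (if influenced (scen E p S t) S i then (1:ℝ) else 0)
      = ∑ i ∈ Finset.univ \ S, (if t < piStar E p S i then (1:ℝ) else 0) := by
    apply Finset.sum_congr rfl
    intro i hi
    rw [Finset.mem_sdiff] at hi
    have := influenced_scen_iff (S := S) hp ht0 ht1 i
    rw [or_iff_right hi.2] at this
    by_cases h : t < piStar E p S i
    · rw [if_pos (this.mpr h), if_pos h]
    · rw [if_neg (fun hin => h (this.mp hin)), if_neg h]
  rw [h1, h2]
  ring

include hp in
lemma expInf_thetaStar :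
    expInf (thetaStar E p S) S =
      (S.card : ℝ) + ∑ i ∈ Finset.univ \ S, piStar E p S i := by
  classical
  rw [expInf, sum_c_theta_mul]
  have hterm : ∀ x ∈ (bps E p S).erase 1,
      (nxt E p S x - x) * (R (scen E p S x) S : ℝ) =
        (nxt E p S x - x) * (S.card : ℝ) +
          ∑ i ∈ Finset.univ \ S, (nxt E p S x - x) * (if x < piStar E p S i then 1 else 0) := by
    intro x hx
    rw [mem_K_iff] at hx
    rw [R_scen hp (bps_nonneg hx.1) hx.2, mul_add, Finset.mul_sum]
  rw [Finset.sum_congr rfl hterm, Finset.sum_add_distrib, ← Finset.sum_mul, sum_K_delta hp,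
    one_mul, Finset.sum_comm]
  congr 1
  apply Finset.sum_congr rfl
  intro i hi
  rw [Finset.mem_sdiff] at hi
  have hpis : piStar E p S i ∈ bps E p S := by
    have := piV_mem_bps hp (S := S) i
    rwa [piV, if_neg hi.2] at this
  have hnn := piStar_nonneg hp (S := S) i
  simp only [mul_ite, mul_one, mul_zero]
  rw [← Finset.sum_filter]
  have hset : ((bps E p S).erase 1).filter (fun x => x < piStar E p S i) =
      (bps E p S).filter (fun x => 0 ≤ x ∧ x < piStar E p S i) := by
    ext x
    rw [Finset.mem_filter, Finset.mem_filter, mem_K_iff]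
    constructor
    · rintro ⟨⟨h1, _⟩, h2⟩
      exact ⟨h1, bps_nonneg h1, h2⟩
    · rintro ⟨h1, _, h2⟩
      exact ⟨⟨h1, lt_of_lt_of_le h2 (piStar_le_one hp i)⟩, h2⟩
  rw [hset, sum_interval' hp zero_mem_bps hpis hnn]
  ring

end Theta
section Lower
variable {E : Finset (V × V)} {p : V × V → ℝ} {S : Finset V}
variable {θ : Finset (V × V) → ℝ}

open Classical in
lemma union_bound (hθ : memTheta E p θ) :
    ∀ (l : List (V × V)), (∀ e ∈ l, e ∈ E) →
      1 - (l.map (fun e => 1 - p e)).sum ≤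
        ∑ c : Finset (V × V), θ c * (if ∀ e ∈ l, e ∈ c then 1 else 0) := by
  obtain ⟨hnn, -, htot, hmarg⟩ := hθ
  intro l
  induction l with
  | nil =>
    intro _
    simp only [List.map_nil, List.sum_nil, List.not_mem_nil, false_implies, implies_true,
      if_true, mul_one]
    rw [htot]
    norm_num
  | cons e l ih =>
    intro hl
    have he : e ∈ E := hl e List.mem_cons_self
    have hIH := ih (fun e' he' => hl e' (List.mem_cons_of_mem e he'))
    have hmarg' : ∑ c : Finset (V × V), θ c * (if e ∈ c then 1 else 0) = p e := by
      rw [← hmarg e he]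
      apply Finset.sum_congr rfl
      intro c _
      by_cases h : e ∈ c <;> simp [h]
    have hpoint : ∀ c : Finset (V × V),
        θ c * (if ∀ e' ∈ l, e' ∈ c then 1 else 0) - θ c * (1 - (if e ∈ c then 1 else 0)) ≤
          θ c * (if ∀ e' ∈ e :: l, e' ∈ c then 1 else 0) := by
      intro c
      have h0 := hnn c
      by_cases h1 : e ∈ c
      · have hiff : (∀ e' ∈ e :: l, e' ∈ c) ↔ (∀ e' ∈ l, e' ∈ c) := by
          simp [h1]
        have h2 : (if ∀ e' ∈ e :: l, e' ∈ c then (1:ℝ) else 0) =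
            (if ∀ e' ∈ l, e' ∈ c then 1 else 0) := by
          by_cases h3 : ∀ e' ∈ l, e' ∈ c
          · rw [if_pos h3, if_pos (hiff.mpr h3)]
          · rw [if_neg h3, if_neg (fun h => h3 (hiff.mp h))]
        rw [if_pos h1, h2]
        linarith
      · have hnot : ¬ (∀ e' ∈ e :: l, e' ∈ c) := by
          intro h
          exact h1 (h e List.mem_cons_self)
        rw [if_neg h1, if_neg hnot]
        by_cases h2 : ∀ e' ∈ l, e' ∈ c
        · rw [if_pos h2]; linarith
        · rw [if_neg h2]; linarith
    calc 1 - ((e :: l).map (fun e => 1 - p e)).sum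
        = (1 - (l.map (fun e => 1 - p e)).sum) - (1 - p e) := by
          simp only [List.map_cons, List.sum_cons]; ring
      _ ≤ (∑ c : Finset (V × V), θ c * (if ∀ e' ∈ l, e' ∈ c then 1 else 0)) - (1 - p e) := by
          linarith
      _ = ∑ c : Finset (V × V), (θ c * (if ∀ e' ∈ l, e' ∈ c then 1 else 0)
            - θ c * (1 - (if e ∈ c then 1 else 0))) := by
          rw [Finset.sum_sub_distrib]
          congr 1
          have : ∑ c : Finset (V × V), θ c * (1 - (if e ∈ c then 1 else 0)) = 1 - p e := by
            have : ∀ c : Finset (V × V), θ c * (1 - (if e ∈ c then 1 else 0)) =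
                θ c - θ c * (if e ∈ c then 1 else 0) := fun c => by ring
            rw [Finset.sum_congr rfl (fun c _ => this c), Finset.sum_sub_distrib, htot, hmarg']
          rw [this]
      _ ≤ ∑ c : Finset (V × V), θ c * (if ∀ e' ∈ e :: l, e' ∈ c then 1 else 0) :=
          Finset.sum_le_sum (fun c _ => hpoint c)

open Classical in
lemma prob_influenced_ge (hp : ∀ e ∈ E, 0 ≤ p e ∧ p e ≤ 1) (hθ : memTheta E p θ)
    {i : V} (hi : i ∉ S) :
    piStar E p S i ≤ ∑ c : Finset (V × V), θ c * (if influenced c S i then 1 else 0) := by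
  apply csSup_le ⟨0, Set.mem_insert _ _⟩
  rintro x (rfl | ⟨γ, hγ, rfl⟩)
  · apply Finset.sum_nonneg
    intro c _
    have := hθ.1 c
    by_cases h : influenced c S i <;> simp [h] <;> positivity
  · obtain ⟨hlen, ⟨s, hs, hhead⟩, hlast, hchain⟩ := hγ
    have hedges : ∀ e ∈ pathEdges γ, e ∈ E := by
      intro e he
      exact chain'_iff_pathEdges.mp hchain e he
    have h1 := union_bound hθ (pathEdges γ) hedges
    rw [L]
    refine le_trans h1 (Finset.sum_le_sum ?_)
    intro c _
    have h0 := hθ.1 c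
    by_cases h2 : ∀ e ∈ pathEdges γ, e ∈ c
    · have hinfl : influenced c S i := by
        have hcc : γ.Chain' (fun a b : V => (a, b) ∈ c) :=
          chain'_iff_pathEdges.mpr (fun e he => h2 e he)
        obtain ⟨rest, rfl⟩ : ∃ rest, γ = s :: rest := by
          cases γ with
          | nil => simp at hhead
          | cons a l =>
            simp only [List.head?_cons, Option.some_inj] at hhead
            exact ⟨l, by rw [hhead]⟩
        exact ⟨s, hs, chain'_reflTransGen hcc hlast⟩
      rw [if_pos h2, if_pos hinfl]
    · rw [if_neg h2]
      by_cases h3 : influenced c S i <;> simp [h3] <;> positivity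

open Classical in
lemma expInf_eq_sum_prob (θ : Finset (V × V) → ℝ) (S : Finset V) :
    expInf θ S = ∑ i : V, ∑ c : Finset (V × V), θ c * (if influenced c S i then 1 else 0) := by
  rw [expInf, Finset.sum_comm]
  apply Finset.sum_congr rfl
  intro c _
  rw [R_eq_sum, Finset.mul_sum]

lemma expInf_ge (hp : ∀ e ∈ E, 0 ≤ p e ∧ p e ≤ 1) (hθ : memTheta E p θ) :
    (S.card : ℝ) + ∑ i ∈ Finset.univ \ S, piStar E p S i ≤ expInf θ S := by
  classical
  rw [expInf_eq_sum_prob, ← Finset.sum_sdiff (Finset.subset_univ S)]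
  have h1 : ∀ i ∈ S, (1:ℝ) ≤ ∑ c : Finset (V × V), θ c * (if influenced c S i then 1 else 0) := by
    intro i hi
    have : ∀ c : Finset (V × V), θ c * (if influenced c S i then 1 else 0) = θ c := by
      intro c
      rw [if_pos ⟨i, hi, Relation.ReflTransGen.refl⟩, mul_one]
    rw [Finset.sum_congr rfl (fun c _ => this c), hθ.2.2.1]
  have h2 : ∀ i ∈ Finset.univ \ S, piStar E p S i ≤
      ∑ c : Finset (V × V), θ c * (if influenced c S i then 1 else 0) := by
    intro i hi
    rw [Finset.mem_sdiff] at hi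
    exact prob_influenced_ge hp hθ hi.2
  have hS : (S.card : ℝ) ≤ ∑ i ∈ S, ∑ c : Finset (V × V),
      θ c * (if influenced c S i then 1 else 0) := by
    calc (S.card : ℝ) = ∑ _i ∈ S, (1:ℝ) := by simp
      _ ≤ _ := Finset.sum_le_sum h1
  have hT := Finset.sum_le_sum h2
  linarith

end Lower

/-- for every seed set `S` there is a distribution `θ* ∈ Θ` with
`E_{θ*}[R(c̃, S)] = |S| + ∑_{i ∈ V \ S} π*_i`; consequently
`f^corr(S) = |S| + ∑_{i ∈ V \ S} π*_i`. -/
theorem exists_minimizer_and_fcorr_eq (E : Finset (V × V)) (p : V × V → ℝ)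
    (hp : ∀ e ∈ E, 0 ≤ p e ∧ p e ≤ 1) (S : Finset V) :
    (∃ θs : Finset (V × V) → ℝ, memTheta E p θs ∧
        expInf θs S = (S.card : ℝ) + ∑ i ∈ Finset.univ \ S, piStar E p S i) ∧
      fcorr E p S = (S.card : ℝ) + ∑ i ∈ Finset.univ \ S, piStar E p S i := by
  have hmem := memTheta_thetaStar (S := S) hp
  have hexp := expInf_thetaStar (S := S) hp
  refine ⟨⟨thetaStar E p S, hmem, hexp⟩, ?_⟩
  have hmemset : ((S.card : ℝ) + ∑ i ∈ Finset.univ \ S, piStar E p S i) ∈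
      {x : ℝ | ∃ θ, memTheta E p θ ∧ x = expInf θ S} :=
    ⟨thetaStar E p S, hmem, hexp.symm⟩
  have hlb : ∀ x ∈ {x : ℝ | ∃ θ, memTheta E p θ ∧ x = expInf θ S},
      (S.card : ℝ) + ∑ i ∈ Finset.univ \ S, piStar E p S i ≤ x := by
    rintro x ⟨θ, hθ, rfl⟩
    exact expInf_ge hp hθ
  exact le_antisymm (csInf_le ⟨_, hlb⟩ hmemset) (le_csInf ⟨_, hmemset⟩ hlb)

end CorrIM
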